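/- Let R be a commutative ring in which 1 + 1 = 0, and let A, B, H be R-modules. Let d : A × B × H → A × B × H be the R-linear endomorphism given in block form by d(a,b,h) = (f a + g₁ b + m h, u a + g b + n h, p a + q b + l h), where f : A → A, g₁ : B → A, m : H → A, u : A → B, g : B → B, n : H → B, p : A → H, q : B → H, l : H → H are R-linear maps. Assume d ∘ d = 0 and that u is an invertible R-linear map (in the paper u = I + k where k is strictly lower-triangular with respect to an energy filtration). Set L = l + p ∘ u⁻¹ ∘ n : H → H. Then L ∘ L = 0 and there is an isomorphism of R-modules (ker d)/(range d) ≅ (ker L)/(range L). -/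
import Mathlib

lemma char2_add_self' {R M : Type*} [CommRing R] [AddCommGroup M] [Module R M]
    (hchar : (1 : R) + 1 = 0) (x : M) : x + x = 0 := by
  have h : ((1:R)+1) • x = x + x := by rw [add_smul, one_smul]
  rw [hchar, zero_smul] at h; exact h.symm

lemma char2_isolate3 {R M : Type*} [CommRing R] [AddCommGroup M] [Module R M]
    (hchar : (1 : R) + 1 = 0) {x y z : M} (h : x + y + z = 0) : z = x + y := by
  have hz : z + z = 0 := char2_add_self' hchar z
  exact ((eq_neg_of_add_eq_zero_left h).trans (neg_eq_of_add_eq_zero_left hz)).symm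

lemma char2_isolate2 {R M : Type*} [CommRing R] [AddCommGroup M] [Module R M]
    (hchar : (1 : R) + 1 = 0) {x y : M} (h : x + y = 0) : y = x := by
  have h2 := char2_isolate3 hchar (show 0 + x + y = 0 by rwa [zero_add])
  simpa using h2

lemma char2_nsmul2 {R M : Type*} [CommRing R] [AddCommGroup M] [Module R M]
    (hchar : (1 : R) + 1 = 0) (x : M) : (2:ℕ) • x = 0 := by
  rw [two_smul]; exact char2_add_self' hchar x

lemma char2_zsmul2 {R M : Type*} [CommRing R] [AddCommGroup M] [Module R M]
    (hchar : (1 : R) + 1 = 0) (x : M) : (2:ℤ) • x = 0 := by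
  rw [two_smul]; exact char2_add_self' hchar x

lemma char2_zsmulneg2 {R M : Type*} [CommRing R] [AddCommGroup M] [Module R M]
    (hchar : (1 : R) + 1 = 0) (x : M) : (-2:ℤ) • x = 0 := by
  rw [neg_smul, char2_zsmul2 hchar, neg_zero]

/-- Lemma 3.1 of the paper (Lemma `HF`): if `d` on `A × B × H` has block form
`d(a,b,h) = (f a + g₁ b + m h, u a + g b + n h, p a + q b + l h)` with `d ∘ d = 0`
and `u` an invertible `R`-linear map, then `L = l + p ∘ u⁻¹ ∘ n` squares to zero and
the homology `ker d / range d` is isomorphic to `ker L / range L`. -/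
theorem stmt0 {R : Type*} [CommRing R] (hchar : (1 : R) + 1 = 0)
    {A B H : Type*} [AddCommGroup A] [AddCommGroup B] [AddCommGroup H]
    [Module R A] [Module R B] [Module R H]
    (f : A →ₗ[R] A) (g₁ : B →ₗ[R] A) (m : H →ₗ[R] A)
    (u : A →ₗ[R] B) (g : B →ₗ[R] B) (n : H →ₗ[R] B)
    (p : A →ₗ[R] H) (q : B →ₗ[R] H) (l : H →ₗ[R] H)
    (d : (A × B × H) →ₗ[R] (A × B × H))
    (hd : ∀ a b h, d (a, b, h) = (f a + g₁ b + m h, u a + g b + n h, p a + q b + l h))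
    (hdd : d.comp d = 0)
    (e : A ≃ₗ[R] B) (hu : (e : A →ₗ[R] B) = u) :
    (l + p.comp ((e.symm : B →ₗ[R] A).comp n)).comp
        (l + p.comp ((e.symm : B →ₗ[R] A).comp n)) = 0 ∧
    Nonempty
      ((LinearMap.ker d ⧸ (LinearMap.range d).comap (LinearMap.ker d).subtype) ≃ₗ[R]
        (LinearMap.ker (l + p.comp ((e.symm : B →ₗ[R] A).comp n)) ⧸
          (LinearMap.range (l + p.comp ((e.symm : B →ₗ[R] A).comp n))).comap
            (LinearMap.ker (l + p.comp ((e.symm : B →ₗ[R] A).comp n))).subtype)) := by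
  have hzA : ∀ x : A, x + x = 0 := char2_add_self' hchar
  have hzB : ∀ x : B, x + x = 0 := char2_add_self' hchar
  have hzH : ∀ x : H, x + x = 0 := char2_add_self' hchar
  set v : B →ₗ[R] A := (e.symm : B →ₗ[R] A) with hv
  set L : H →ₗ[R] H := l + p.comp (v.comp n) with hL
  have uv : ∀ b : B, u (v b) = b := by
    intro b; rw [← hu]; exact e.apply_symm_apply b
  have vu : ∀ a : A, v (u a) = a := by
    intro a; show e.symm (u a) = a; rw [← hu]; exact e.symm_apply_apply a
  have hLx : ∀ x : H, L x = l x + p (v (n x)) := fun x => rfl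
  have hdd' : ∀ x : A × B × H, d (d x) = 0 := fun x => by
    simpa using DFunLike.congr_fun hdd x
  have K : ∀ a b h,
      (f (f a + g₁ b + m h) + g₁ (u a + g b + n h) + m (p a + q b + l h) = 0)
      ∧ (u (f a + g₁ b + m h) + g (u a + g b + n h) + n (p a + q b + l h) = 0)
      ∧ (p (f a + g₁ b + m h) + q (u a + g b + n h) + l (p a + q b + l h) = 0) := by
    intro a b h
    have h0 := hdd' (a, b, h)
    rw [hd, hd] at h0
    simpa [Prod.ext_iff] using h0
  have r1 : ∀ x : A, l (p x) = p (f x) + q (u x) := by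
    intro x
    have h0 := (K x 0 0).2.2
    simp only [map_zero, add_zero] at h0
    exact char2_isolate3 hchar h0
  have r2 : ∀ x : A, n (p x) = u (f x) + g (u x) := by
    intro x
    have h0 := (K x 0 0).2.1
    simp only [map_zero, add_zero] at h0
    exact char2_isolate3 hchar h0
  have r3 : ∀ h0 : H, l (l h0) = p (m h0) + q (n h0) := by
    intro x
    have h0 := (K 0 0 x).2.2
    simp only [map_zero, zero_add] at h0
    exact char2_isolate3 hchar h0
  have r4 : ∀ h0 : H, n (l h0) = u (m h0) + g (n h0) := by
    intro x
    have h0 := (K 0 0 x).2.1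
    simp only [map_zero, zero_add] at h0
    exact char2_isolate3 hchar h0
  have r5 : ∀ h0 : H, v (n (l h0)) = m h0 + v (g (n h0)) := by
    intro x; rw [r4, map_add, vu]
  have r6 : ∀ x : A, v (n (p x)) = f x + v (g (u x)) := by
    intro x; rw [r2, map_add, vu]
  constructor
  · apply LinearMap.ext
    intro h0
    show L (L h0) = 0
    rw [hLx h0, hLx]
    simp only [map_add, r3, r5, r6, r1, uv]
    abel_nf
    simp [char2_nsmul2 hchar, char2_zsmul2 hchar]
  · -- the homology isomorphism
    let G0 : (A × B × H) →ₗ[R] H :=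
      ((LinearMap.snd R B H).comp (LinearMap.snd R A (B × H))) +
        p.comp (v.comp ((LinearMap.fst R B H).comp (LinearMap.snd R A (B × H))))
    have G0app : ∀ (a : A) (b : B) (h : H), G0 (a, b, h) = h + p (v b) := fun a b h => rfl
    have kerC : ∀ a b h, (a, b, h) ∈ LinearMap.ker d →
        f a + g₁ b + m h = 0 ∧ u a + g b + n h = 0 ∧ p a + q b + l h = 0 := by
      intro a b h hx
      have h0 : d (a, b, h) = 0 := hx
      rw [hd] at h0
      simpa [Prod.ext_iff] using h0
    have hGker : ∀ x : A × B × H, x ∈ LinearMap.ker d → G0 x ∈ LinearMap.ker L := by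
      rintro ⟨a, b, h⟩ hx
      obtain ⟨c1, c2, c3⟩ := kerC a b h hx
      have hua : u a = g b + n h := by
        apply char2_isolate3 hchar
        rw [show g b + n h + u a = u a + g b + n h from by abel]; exact c2
      have ha : a = v (g b) + v (n h) := by
        conv_lhs => rw [← vu a, hua]
        rw [map_add]
      have hlh : l h = p a + q b := char2_isolate3 hchar c3
      rw [LinearMap.mem_ker]
      show L (G0 (a, b, h)) = 0
      rw [G0app, hLx]
      simp only [map_add, hlh, ha, r1, r6, uv]
      abel_nf
      simp [char2_nsmul2 hchar, char2_zsmul2 hchar, char2_zsmulneg2 hchar]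
    let G : LinearMap.ker d →ₗ[R] LinearMap.ker L :=
      LinearMap.codRestrict (LinearMap.ker L) (G0.comp (LinearMap.ker d).subtype)
        (fun x => hGker x.1 x.2)
    let J := (LinearMap.range L).comap (LinearMap.ker L).subtype
    let F : LinearMap.ker d →ₗ[R] (LinearMap.ker L ⧸ J) := J.mkQ.comp G
    have hFsurj : Function.Surjective F := by
      intro y
      obtain ⟨⟨h0, hh0⟩, rfl⟩ := Submodule.mkQ_surjective J y
      have hLh0 : l h0 + p (v (n h0)) = 0 := by rw [← hLx]; exact hh0
      have hlh0 : l h0 = p (v (n h0)) :=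
        (char2_isolate2 hchar hLh0).symm
      have hm : m h0 = v (n (l h0)) + v (g (n h0)) := by
        rw [r5 h0, add_assoc, hzA, add_zero]
      have hmem : ((v (n h0), (0:B), h0) : A × B × H) ∈ LinearMap.ker d := by
        rw [LinearMap.mem_ker, hd, Prod.mk_eq_zero, Prod.mk_eq_zero]
        refine ⟨?_, ?_, ?_⟩
        · rw [map_zero, add_zero, hm, hlh0, r6, uv]
          abel_nf
          simp [char2_nsmul2 hchar, char2_zsmul2 hchar, char2_zsmulneg2 hchar]
        · rw [map_zero, add_zero, uv]; exact hzB _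
        · rw [map_zero, add_zero, hlh0]; exact hzH _
      refine ⟨⟨(v (n h0), 0, h0), hmem⟩, ?_⟩
      have hGval : G ⟨(v (n h0), 0, h0), hmem⟩ = ⟨h0, hh0⟩ := by
        apply Subtype.ext
        show G0 (v (n h0), 0, h0) = h0
        rw [G0app, map_zero, map_zero, add_zero]
      show J.mkQ (G ⟨(v (n h0), 0, h0), hmem⟩) = Submodule.Quotient.mk ⟨h0, hh0⟩
      rw [hGval, Submodule.mkQ_apply]
    have hFker : LinearMap.ker F = (LinearMap.range d).comap (LinearMap.ker d).subtype := by
      apply Submodule.ext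
      rintro ⟨⟨a, b, h⟩, hmem⟩
      obtain ⟨c1, c2, c3⟩ := kerC a b h hmem
      have hF : (⟨(a, b, h), hmem⟩ : LinearMap.ker d) ∈ LinearMap.ker F ↔
          G0 (a, b, h) ∈ LinearMap.range L := by
        rw [LinearMap.mem_ker]
        show J.mkQ (G ⟨(a, b, h), hmem⟩) = 0 ↔ _
        rw [Submodule.mkQ_apply, Submodule.Quotient.mk_eq_zero]
        exact Iff.rfl
      rw [hF, Submodule.mem_comap]
      show _ ↔ (a, b, h) ∈ LinearMap.range d
      constructor
      · rintro ⟨h0, hh0⟩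
        rw [G0app] at hh0
        have hh : h = L h0 + p (v b) := by
          rw [hh0, add_assoc, hzH, add_zero]
        have hua : u a = g b + n h := by
          apply char2_isolate3 hchar
          rw [show g b + n h + u a = u a + g b + n h from by abel]; exact c2
        have ha : a = v (g b) + v (n h) := by
          conv_lhs => rw [← vu a, hua]
          rw [map_add]
        refine ⟨(v b + v (n h0), 0, h0), ?_⟩
        rw [hd, Prod.mk.injEq, Prod.mk.injEq]
        refine ⟨?_, ?_, ?_⟩
        · rw [map_zero, add_zero, ha, hh]
          simp only [hLx, map_add, r5, r6, uv]
          rw [← sub_eq_zero]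
          abel_nf
          simp [char2_nsmul2 hchar, char2_zsmul2 hchar, char2_zsmulneg2 hchar]
        · rw [map_zero, add_zero, map_add, uv, uv, add_assoc, hzB, add_zero]
        · rw [map_zero, add_zero, hh]
          simp only [hLx, map_add, r5, r6, uv]
          rw [← sub_eq_zero]
          abel_nf
      · rintro ⟨⟨a0, b0, h0⟩, hy⟩
        rw [hd] at hy
        obtain ⟨e1, e2, e3⟩ : f a0 + g₁ b0 + m h0 = a ∧ u a0 + g b0 + n h0 = b ∧
            p a0 + q b0 + l h0 = h := by simpa [Prod.ext_iff] using hy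
        refine ⟨h0 + p (v b0), ?_⟩
        rw [G0app, ← e2, ← e3]
        simp only [hLx, map_add, r1, r6, uv, vu]
        rw [← sub_eq_zero]
        abel_nf
        simp [char2_nsmul2 hchar, char2_zsmul2 hchar, char2_zsmulneg2 hchar]
    exact ⟨(Submodule.quotEquivOfEq _ _ hFker.symm).trans
      (F.quotKerEquivOfSurjective hFsurj)⟩
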